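/- Access control soundness: if a system M with structured state satisfies the dynamic reference monitor conditions DRM-1 through DRM-6 with respect to a dynamic policy ↣, then M is ta^◇-secure with respect to ↣; if M additionally satisfies the stronger condition DRM-5' (s ≈ᵃᶜ_u t and s ≈ᵃᶜ_v t imply observe(u,s) ∩ alter(v,s) = observe(u,t) ∩ alter(v,t)), then M is ta^□-secure with respect to ↣. -/
import Mathlib


open Classical

/-- Binary trees over actions, values of the `ta` purge functions. -/
inductive TATree (A : Type) : Type where
  | eps : TATree A
  | node : TATree A → TATree A → A → TATree A

/-- Run a deterministic system along a trace (newest action at the head of the list). -/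
def runL {S A : Type} (step : S → A → S) (s0 : S) : List A → S
  | [] => s0
  | a :: α => step (runL step s0 α) a

/-- The permissive purge function `ta^◇` for a dynamic policy `P`. -/
noncomputable def taD {D A : Type} (dm : A → D) (P : List A → D → D → Prop) :
    List A → D → TATree A
  | [], _ => TATree.eps
  | a :: α, u =>
    if P α (dm a) u then TATree.node (taD dm P α u) (taD dm P α (dm a)) a
    else taD dm P α u

/-- The unwinding relations: smallest family of equivalence relations on traces
satisfying WSC and DLR with respect to the dynamic policy `P`. -/
inductive Unw {D A : Type} (dm : A → D) (P : List A → D → D → Prop) :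
    D → List A → List A → Prop where
  | refl (u : D) (α : List A) : Unw dm P u α α
  | symm {u : D} {α β : List A} : Unw dm P u α β → Unw dm P u β α
  | trans {u : D} {α β γ : List A} : Unw dm P u α β → Unw dm P u β γ → Unw dm P u α γ
  | dlr (u : D) (α : List A) (a : A) : ¬ P α (dm a) u → Unw dm P u (a :: α) α
  | wsc (u : D) {α β : List A} (a : A) :
      Unw dm P u α β → Unw dm P (dm a) α β → Unw dm P u (a :: α) (a :: β)

/-- The prohibitive purge function `ta^□`, whose condition is distributed knowledge
of the policy edge, interpreted over the Kripke structure given by the unwinding relations. -/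
noncomputable def taB {D A : Type} (dm : A → D) (P : List A → D → D → Prop) :
    List A → D → TATree A
  | [], _ => TATree.eps
  | a :: α, u =>
    if (∀ β, Unw dm P u α β → Unw dm P (dm a) α β → P β (dm a) u) then
      TATree.node (taB dm P α u) (taB dm P α (dm a)) a
    else taB dm P α u

section Aux
variable {D A S Obj Val : Type}

/-- Agreement on contents of objects observed by `u` in the left state. -/
def EqO (contents : Obj → S → Val) (observe : D → S → Set Obj) (u : D) (s t : S) : Prop :=
  ∀ o ∈ observe u s, contents o s = contents o t

theorem eqO_obs {contents : Obj → S → Val} {observe : D → S → Set Obj}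
    {oset : D → Obj} {osetVal : Set Obj → Val}
    (hinj : Function.Injective osetVal)
    (hc : ∀ u s, contents (oset u) s = osetVal (observe u s))
    (hm : ∀ u s, oset u ∈ observe u s)
    {u : D} {s t : S} (h : EqO contents observe u s t) : observe u s = observe u t := by
  have h0 := h (oset u) (hm u s)
  rw [hc, hc] at h0
  exact hinj h0

theorem eqO_symm {contents : Obj → S → Val} {observe : D → S → Set Obj}
    {oset : D → Obj} {osetVal : Set Obj → Val}
    (hinj : Function.Injective osetVal)
    (hc : ∀ u s, contents (oset u) s = osetVal (observe u s))
    (hm : ∀ u s, oset u ∈ observe u s)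
    {u : D} {s t : S} (h : EqO contents observe u s t) : EqO contents observe u t s := by
  have hob := eqO_obs hinj hc hm h
  intro o ho
  exact (h o (hob ▸ ho)).symm

theorem eqO_trans {contents : Obj → S → Val} {observe : D → S → Set Obj}
    {oset : D → Obj} {osetVal : Set Obj → Val}
    (hinj : Function.Injective osetVal)
    (hc : ∀ u s, contents (oset u) s = osetVal (observe u s))
    (hm : ∀ u s, oset u ∈ observe u s)
    {u : D} {s t r : S} (h1 : EqO contents observe u s t) (h2 : EqO contents observe u t r) :
    EqO contents observe u s r := by
  have hob := eqO_obs hinj hc hm h1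
  intro o ho
  rw [h1 o ho]
  exact h2 o (hob ▸ ho)

/-- DLR step lemma: a disallowed action leaves the view of `u` unchanged. -/
theorem dlrLem {contents : Obj → S → Val} {observe alter : D → S → Set Obj}
    {oset : D → Obj} {osetVal : Set Obj → Val}
    (hinj : Function.Injective osetVal)
    (hc : ∀ u s, contents (oset u) s = osetVal (observe u s))
    (hm : ∀ u s, oset u ∈ observe u s)
    {u v : D} {s s' : S}
    (h3 : ∀ o : Obj, contents o s' ≠ contents o s → o ∈ alter v s)
    (h6 : (alter v s ∩ observe u s).Nonempty → False) :
    EqO contents observe u s' s := by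
  have hob : observe u s' = observe u s := by
    by_contra hne
    have hco : contents (oset u) s' ≠ contents (oset u) s := by
      rw [hc, hc]
      exact fun h => hne (hinj h)
    exact h6 ⟨oset u, h3 _ hco, hm u s⟩
  intro o ho
  by_contra hne
  exact h6 ⟨o, h3 o hne, hob ▸ ho⟩

/-- WSC step lemma. -/
theorem wscLem {contents : Obj → S → Val} {observe alter : D → S → Set Obj}
    {oset : D → Obj} {osetVal : Set Obj → Val}
    (hinj : Function.Injective osetVal)
    (hc : ∀ u s, contents (oset u) s = osetVal (observe u s))
    (hm : ∀ u s, oset u ∈ observe u s)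
    {u v : D} {s t s' t' : S}
    (hd2 : ∀ o : Obj, o ∈ alter v s → o ∈ alter v t → contents o s = contents o t →
        contents o s' = contents o t')
    (hd3s : ∀ o : Obj, contents o s' ≠ contents o s → o ∈ alter v s)
    (hd3t : ∀ o : Obj, contents o t' ≠ contents o t → o ∈ alter v t)
    (hd4 : ∀ o : Obj, o ∈ observe u s' → o ∉ observe u s → o ∈ observe v s)
    (h1 : EqO contents observe u s t) (hv : EqO contents observe v s t)
    (hI1 : observe u s ∩ alter v s = observe u t ∩ alter v t)
    (hI2 : observe v s ∩ alter v s = observe v t ∩ alter v t) :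
    EqO contents observe u s' t' := by
  have helper : ∀ w, EqO contents observe w s t →
      observe w s ∩ alter v s = observe w t ∩ alter v t →
      ∀ o ∈ observe w s, contents o s' = contents o t' := by
    intro w hw hI o ho
    have hob := eqO_obs hinj hc hm hw
    have hst := hw o ho
    by_cases hal : o ∈ alter v s
    · have hmem : o ∈ observe w t ∩ alter v t := by rw [← hI]; exact ⟨ho, hal⟩
      exact hd2 o hal hmem.2 hst
    · have halt : o ∉ alter v t := by
        intro hx
        have hmem : o ∈ observe w s ∩ alter v s := by rw [hI]; exact ⟨hob ▸ ho, hx⟩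
        exact hal hmem.2
      have e1 : contents o s' = contents o s := by
        by_contra hne; exact hal (hd3s o hne)
      have e2 : contents o t' = contents o t := by
        by_contra hne; exact halt (hd3t o hne)
      rw [e1, e2]; exact hst
  intro o ho
  by_cases hos : o ∈ observe u s
  · exact helper u h1 hI1 o hos
  · exact helper v hv hI2 o (hd4 o ho hos)

end Aux

/-- access control soundness: the dynamic reference monitor conditions
DRM-1 … DRM-6 imply `ta^◇`-security, and with the stronger DRM-5' also `ta^□`-security. -/
theorem statement_18 {D A S Out Obj Val : Type} (dm : A → D) (P : List A → D → D → Prop)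
    (hrefl : ∀ α u, P α u u)
    (step : S → A → S) (s0 : S) (obs : D → S → Out)
    (contents : Obj → S → Val) (observe alter : D → S → Set Obj)
    (oset : D → Obj) (osetVal : Set Obj → Val)
    (hinj : Function.Injective osetVal)
    (hosetContents : ∀ u s, contents (oset u) s = osetVal (observe u s))
    (hosetMem : ∀ u s, oset u ∈ observe u s)
    (drm1 : ∀ u (s t : S), (∀ o ∈ observe u s, contents o s = contents o t) →
        obs u s = obs u t)
    (drm2 : ∀ (a : A) (s t : S) (o : Obj), o ∈ alter (dm a) s → o ∈ alter (dm a) t →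
        (∀ o' ∈ observe (dm a) s, contents o' s = contents o' t) →
        contents o s = contents o t → contents o (step s a) = contents o (step t a))
    (drm3 : ∀ (a : A) (s : S) (o : Obj), contents o (step s a) ≠ contents o s →
        o ∈ alter (dm a) s)
    (drm4 : ∀ u (s : S) (a : A), observe u (step s a) \ observe u s ⊆ observe (dm a) s)
    (drm5 : ∀ u v (α β : List A), P α v u → P β v u →
        (∀ o ∈ observe u (runL step s0 α), contents o (runL step s0 α) = contents o (runL step s0 β)) →
        (∀ o ∈ observe v (runL step s0 α), contents o (runL step s0 α) = contents o (runL step s0 β)) →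
        observe u (runL step s0 α) ∩ alter v (runL step s0 α) =
          observe u (runL step s0 β) ∩ alter v (runL step s0 β))
    (drm6 : ∀ u v (α : List A),
        (alter u (runL step s0 α) ∩ observe v (runL step s0 α)).Nonempty → P α u v) :
    (∀ u (α β : List A), taD dm P α u = taD dm P β u →
        obs u (runL step s0 α) = obs u (runL step s0 β)) ∧
    ((∀ u v (s t : S), (∀ o ∈ observe u s, contents o s = contents o t) →
        (∀ o ∈ observe v s, contents o s = contents o t) →
        observe u s ∩ alter v s = observe u t ∩ alter v t) →
      ∀ u (α β : List A), Unw dm P u α β →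
        obs u (runL step s0 α) = obs u (runL step s0 β)) := by
  -- abbreviations
  have hsym : ∀ u (s t : S), EqO contents observe u s t → EqO contents observe u t s :=
    fun _ _ _ h => eqO_symm hinj hosetContents hosetMem h
  have htr : ∀ u (s t r : S), EqO contents observe u s t → EqO contents observe u t r →
      EqO contents observe u s r :=
    fun _ _ _ _ h1 h2 => eqO_trans hinj hosetContents hosetMem h1 h2
  -- key lemma for part 1
  have key1 : ∀ n (α β : List A) u, α.length + β.length ≤ n →
      taD dm P α u = taD dm P β u →
      EqO contents observe u (runL step s0 α) (runL step s0 β) := by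
    intro n
    induction n with
    | zero =>
      intro α β u hlen _
      cases α with
      | nil => cases β with
        | nil => intro o _; rfl
        | cons b β' => simp at hlen
      | cons a α' => simp at hlen
    | succ n ih =>
      intro α β u hlen h
      cases α with
      | nil =>
        cases β with
        | nil => intro o _; rfl
        | cons b β' =>
          by_cases hQ : P β' (dm b) u
          · exfalso; simp [taD, hQ] at h
          · have h' : taD dm P ([] : List A) u = taD dm P β' u := by
              simpa [taD, hQ] using h
            have ih1 := ih [] β' u (by simp at hlen ⊢; omega) h'
            have hdlr : EqO contents observe u (step (runL step s0 β') b) (runL step s0 β') :=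
              dlrLem hinj hosetContents hosetMem
                (fun o ho => drm3 b _ o ho)
                (fun hne => hQ (drm6 (dm b) u β' hne))
            exact htr _ _ _ _ ih1 (hsym _ _ _ hdlr)
      | cons a α' =>
        by_cases hP : P α' (dm a) u
        · cases β with
          | nil => exfalso; simp [taD, hP] at h
          | cons b β' =>
            by_cases hQ : P β' (dm b) u
            · simp only [taD, if_pos hP, if_pos hQ, TATree.node.injEq] at h
              obtain ⟨h1, h2, hab⟩ := h
              subst hab
              have e1 := ih α' β' u (by simp at hlen ⊢; omega) h1
              have e2 := ih α' β' (dm a) (by simp at hlen ⊢; omega) h2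
              have hI1 := drm5 u (dm a) α' β' hP hQ e1 e2
              have hI2 := drm5 (dm a) (dm a) α' β' (hrefl α' (dm a)) (hrefl β' (dm a)) e2 e2
              exact wscLem hinj hosetContents hosetMem
                (fun o has hat hco => drm2 a _ _ o has hat e2 hco)
                (fun o => drm3 a _ o) (fun o => drm3 a _ o)
                (fun o ho hno => drm4 u _ a ⟨ho, hno⟩)
                e1 e2 hI1 hI2
            · have h' : taD dm P (a :: α') u = taD dm P β' u := by
                rw [h]; simp [taD, hQ]
              have ih1 := ih (a :: α') β' u (by simp at hlen ⊢; omega) h'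
              have hdlr : EqO contents observe u (step (runL step s0 β') b) (runL step s0 β') :=
                dlrLem hinj hosetContents hosetMem
                  (fun o ho => drm3 b _ o ho)
                  (fun hne => hQ (drm6 (dm b) u β' hne))
              exact htr _ _ _ _ ih1 (hsym _ _ _ hdlr)
        · have h' : taD dm P α' u = taD dm P β u := by
            rw [← h]; simp [taD, hP]
          have ih1 := ih α' β u (by simp at hlen ⊢; omega) h'
          have hdlr : EqO contents observe u (step (runL step s0 α') a) (runL step s0 α') :=
            dlrLem hinj hosetContents hosetMem
              (fun o ho => drm3 a _ o ho)
              (fun hne => hP (drm6 (dm a) u α' hne))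
          exact htr _ _ _ _ hdlr ih1
  constructor
  · intro u α β h
    exact drm1 u _ _ (key1 (α.length + β.length) α β u le_rfl h)
  · intro h5'
    have key2 : ∀ u (α β : List A), Unw dm P u α β →
        EqO contents observe u (runL step s0 α) (runL step s0 β) := by
      intro u α β hU
      induction hU with
      | refl u α => intro o _; rfl
      | symm _ ihh => exact hsym _ _ _ ihh
      | trans _ _ ih1 ih2 => exact htr _ _ _ _ ih1 ih2
      | dlr u α a hna =>
        exact dlrLem hinj hosetContents hosetMem
          (fun o ho => drm3 a _ o ho)
          (fun hne => hna (drm6 (dm a) u α hne))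
      | wsc u a _ _ ih1 ih2 =>
        have hI1 := h5' u (dm a) _ _ ih1 ih2
        have hI2 := h5' (dm a) (dm a) _ _ ih2 ih2
        exact wscLem hinj hosetContents hosetMem
          (fun o has hat hco => drm2 a _ _ o has hat ih2 hco)
          (fun o => drm3 a _ o) (fun o => drm3 a _ o)
          (fun o ho hno => drm4 u _ a ⟨ho, hno⟩)
          ih1 ih2 hI1 hI2
    intro u α β hU
    exact drm1 u _ _ (key2 u α β hU)
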